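/- arXiv:2209.10727 — 2 statements merged into one kernel-verified Lean document; each statement's English description precedes it below -/
import Mathlib

section
/- Let a, b ∈ ℂ with Re(a) > 0 and Re(b) > 0. Define the symmetric Bannai–Ito polynomials by Ŝ_{2m}(x;a,b) = (−1)^m (a)_m(b)_m · Σ_{k=0}^{m} [(−m)_k/((a)_k(b)_k k!)] · Π_{j=0}^{k−1}(j²+x²) and Ŝ_{2m+1}(x;a,b) = (−1)^m (1+a)_m(1+b)_m · x · Σ_{k=0}^{m} [(−m)_k/((1+a)_k(1+b)_k k!)] · Π_{j=1}^{k}(j²+x²). Then for every n ≥ 1, x·Ŝ_n(x;a,b) = Ŝ_{n+1}(x;a,b) + τ_n·Ŝ_{n−1}(x;a,b) as polynomials in x, where τ_{2m} = m(m+a+b−1) and τ_{2m+1} = (m+a)(m+b); moreover x·Ŝ_0 = Ŝ_1. -/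
open Polynomial Finset Complex

/-- The Pochhammer symbol `(a)ₖ = a(a+1)⋯(a+k-1)` for complex `a`. -/
noncomputable def pochC (a : ℂ) (k : ℕ) : ℂ := (ascPochhammer ℂ k).eval a

/-- The symmetric Bannai–Ito polynomials `Ŝₙ(x;a,b)`, given by their
continuous-dual-Hahn-type terminating ₃F₂ hypergeometric expressions. -/
noncomputable def symBI (a b : ℂ) (n : ℕ) : Polynomial ℂ :=
  let m : ℕ := n / 2
  if Even n then
    C ((-1 : ℂ) ^ m * pochC a m * pochC b m) *
      ∑ k ∈ range (m + 1),
        C (pochC (-(m : ℂ)) k / (pochC a k * pochC b k * (k.factorial : ℂ))) *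
          ∏ j ∈ range k, (C ((j : ℂ) ^ 2) + X ^ 2)
  else
    C ((-1 : ℂ) ^ m * pochC (1 + a) m * pochC (1 + b) m) * X *
      ∑ k ∈ range (m + 1),
        C (pochC (-(m : ℂ)) k / (pochC (1 + a) k * pochC (1 + b) k * (k.factorial : ℂ))) *
          ∏ j ∈ Icc 1 k, (C ((j : ℂ) ^ 2) + X ^ 2)

/-- The recurrence coefficients `τₙ` of the symmetric Bannai–Ito polynomials:
`τ_{2m} = m(m+a+b-1)`, `τ_{2m+1} = (m+a)(m+b)`. -/
noncomputable def symBItau (a b : ℂ) (n : ℕ) : ℂ :=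
  let m : ℕ := n / 2
  if Even n then (m : ℂ) * ((m : ℂ) + a + b - 1)
  else ((m : ℂ) + a) * ((m : ℂ) + b)

/-! ### basic facts about `pochC` -/

lemma pochC_zero (x : ℂ) : pochC x 0 = 1 := by simp [pochC]

lemma pochC_succ (x : ℂ) (k : ℕ) : pochC x (k + 1) = pochC x k * (x + k) :=
  ascPochhammer_succ_eval k x

lemma pochC_succ_left (x : ℂ) (k : ℕ) : pochC x (k + 1) = x * pochC (1 + x) k := by
  simp [pochC, ascPochhammer_succ_left, eval_comp, add_comm (1:ℂ) x]

lemma pochC_shift (x : ℂ) (k : ℕ) : ((k : ℂ) + x) * pochC x k = x * pochC (1 + x) k := by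
  have h1 := pochC_succ x k
  have h2 := pochC_succ_left x k
  linear_combination h2 - h1

lemma nat_add_ne_zero {x : ℂ} (hx : 0 < x.re) (k : ℕ) : (k : ℂ) + x ≠ 0 := by
  intro h
  have h2 : ((k : ℂ) + x).re = 0 := by rw [h]; simp
  simp only [add_re, natCast_re] at h2
  have hk : (0:ℝ) ≤ (k:ℝ) := Nat.cast_nonneg k
  linarith

lemma ne_zero_of_re {x : ℂ} (hx : 0 < x.re) : x ≠ 0 := by
  intro h; rw [h] at hx; simp at hx

lemma pochC_ne_zero {x : ℂ} (hx : 0 < x.re) (k : ℕ) : pochC x k ≠ 0 := by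
  induction k with
  | zero => simp [pochC_zero]
  | succ k ih =>
      rw [pochC_succ]
      refine mul_ne_zero ih ?_
      have h := nat_add_ne_zero hx k
      intro h'; exact h (by linear_combination h')

lemma pochC_neg_nat (m : ℕ) : pochC (-(m : ℂ)) (m + 1) = 0 := by
  rw [pochC_succ]; simp

lemma pochC_neg_succ (m : ℕ) : pochC (-((m : ℂ) + 1)) (m + 1 + 1) = 0 := by
  rw [pochC_succ]
  have h : (-((m:ℂ)+1) + ((m+1 : ℕ) : ℂ)) = 0 := by push_cast; ring
  rw [h, mul_zero]

lemma fact_ne_zero (j : ℕ) : ((j.factorial : ℕ) : ℂ) ≠ 0 :=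
  Nat.cast_ne_zero.mpr j.factorial_ne_zero

/-! ### the polynomial building blocks -/

noncomputable def Qp (k : ℕ) : Polynomial ℂ := ∏ j ∈ range k, (C ((j : ℂ) ^ 2) + X ^ 2)
noncomputable def Pp (k : ℕ) : Polynomial ℂ := ∏ j ∈ Icc 1 k, (C ((j : ℂ) ^ 2) + X ^ 2)
noncomputable def Op (k : ℕ) : Polynomial ℂ := X * Pp k

lemma Icc_prod_eq (k : ℕ) : Pp k = ∏ i ∈ range k, (C (((i + 1 : ℕ) : ℂ) ^ 2) + X ^ 2) := by
  rw [Pp, ← Finset.Ico_add_one_right_eq_Icc, Finset.prod_Ico_eq_prod_range]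
  simp [add_comm 1]

lemma Qp_succ (k : ℕ) : Qp (k + 1) = X ^ 2 * Pp k := by
  rw [Qp, Finset.prod_range_succ', Icc_prod_eq]
  simp [mul_comm]

lemma Pp_succ (k : ℕ) : Pp (k + 1) = Pp k * (C (((k + 1 : ℕ) : ℂ) ^ 2) + X ^ 2) := by
  rw [Pp, Pp, Finset.prod_Icc_succ_top (by omega : 1 ≤ k + 1)]

lemma Pp_zero : Pp 0 = 1 := by
  rw [Pp, Finset.Icc_eq_empty (by omega)]
  simp

lemma XQ0 : (X : Polynomial ℂ) * Qp 0 = Op 0 := by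
  rw [Qp, Op, Pp_zero]
  simp

lemma XQsucc (j : ℕ) :
    (X : Polynomial ℂ) * Qp (j + 1) = Op (j + 1) - C (((j : ℂ) + 1) ^ 2) * Op j := by
  rw [Qp_succ, Op, Op, Pp_succ, show (((j + 1 : ℕ) : ℂ)) = (j : ℂ) + 1 by push_cast; ring]
  ring

lemma XPQ (k : ℕ) : (X : Polynomial ℂ) * (X * Pp k) = Qp (k + 1) := by
  rw [Qp_succ]; ring

/-! ### evaluation lemmas for `symBI` and `symBItau` -/

lemma symBI_even_eq (a b : ℂ) (m : ℕ) :
    symBI a b (2 * m) = C ((-1 : ℂ) ^ m * pochC a m * pochC b m) *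
      ∑ k ∈ range (m + 1),
        C (pochC (-(m : ℂ)) k / (pochC a k * pochC b k * (k.factorial : ℂ))) * Qp k := by
  have h2 : Even (2 * m) := ⟨m, by omega⟩
  have h1 : 2 * m / 2 = m := by omega
  simp only [symBI, h1, if_pos h2, Qp]

lemma symBI_odd_eq (a b : ℂ) (m : ℕ) :
    symBI a b (2 * m + 1) = C ((-1 : ℂ) ^ m * pochC (1 + a) m * pochC (1 + b) m) * X *
      ∑ k ∈ range (m + 1),
        C (pochC (-(m : ℂ)) k / (pochC (1 + a) k * pochC (1 + b) k * (k.factorial : ℂ))) *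
          Pp k := by
  have h2 : ¬ Even (2 * m + 1) := by rintro ⟨r, hr⟩; omega
  have h1 : (2 * m + 1) / 2 = m := by omega
  simp only [symBI, h1, if_neg h2, Pp]

lemma tau_odd (a b : ℂ) (m : ℕ) :
    symBItau a b (2 * m + 1) = ((m : ℂ) + a) * ((m : ℂ) + b) := by
  have h2 : ¬ Even (2 * m + 1) := by rintro ⟨r, hr⟩; omega
  have h1 : (2 * m + 1) / 2 = m := by omega
  simp only [symBItau, h1, if_neg h2]

lemma tau_even2 (a b : ℂ) (m : ℕ) :
    symBItau a b (2 * (m + 1)) = ((m : ℂ) + 1) * ((m : ℂ) + 1 + a + b - 1) := by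
  have h2 : Even (2 * (m + 1)) := ⟨m + 1, by omega⟩
  have h1 : 2 * (m + 1) / 2 = m + 1 := by omega
  simp only [symBItau, h1, if_pos h2, Nat.cast_add, Nat.cast_one]

/-! ### the two purely algebraic identities -/

lemma odd_alg (a b μ jc s A1 B1 N U V F Pa Pb : ℂ)
    (ha : a ≠ 0) (hb : b ≠ 0) (hA1 : A1 ≠ 0) (hB1 : B1 ≠ 0) (hF : F ≠ 0)
    (hj : jc + 1 ≠ 0)
    (hW : (μ + a) * Pa * ((μ + b) * Pb) = a * U * (b * V)) :
    s * U * V * (N / (A1 * B1 * F))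
      = s * -1 * (a * U) * (b * V) *
          (-(μ + 1) * N / (a * A1 * (b * B1) * ((jc + 1) * F))) +
        (μ + a) * (μ + b) *
          (s * Pa * Pb * (N * (-μ + jc) / (a * A1 * (b * B1) * ((jc + 1) * F)))) := by
  have hD1 : A1 * B1 * F ≠ 0 := mul_ne_zero (mul_ne_zero hA1 hB1) hF
  have hD2 : a * A1 * (b * B1) * ((jc + 1) * F) ≠ 0 :=
    mul_ne_zero (mul_ne_zero (mul_ne_zero ha hA1) (mul_ne_zero hb hB1)) (mul_ne_zero hj hF)
  simp only [← mul_div_assoc]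
  rw [← add_div, div_eq_div_iff hD1 hD2]
  linear_combination (s * N * (μ - jc) * (A1 * B1 * F)) * hW

lemma even_alg (a b μ kc s P Q R U V F Oa Ob Nm : ℂ)
    (hP : P ≠ 0) (hQ : Q ≠ 0) (hF : F ≠ 0)
    (hk : kc + 1 ≠ 0) (hka : a + kc ≠ 0) (hkb : b + kc ≠ 0)
    (hOa : Oa ≠ 0) (hOb : Ob ≠ 0)
    (hW : a * Oa * (b * Ob) = (kc + a) * P * ((kc + b) * Q))
    (hNm : (kc - (μ + 1)) * R = -(μ + 1) * Nm) :
    s * -1 * (a * U) * (b * V) * (R / (P * Q * F)) -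
      s * -1 * (a * U) * (b * V) *
        (R * (-(μ + 1) + kc) / (P * (a + kc) * (Q * (b + kc)) * ((kc + 1) * F))) * (kc + 1) ^ 2
    = s * -1 * (U * (1 + a + μ)) * (V * (1 + b + μ)) * (R / (Oa * Ob * F)) +
      (μ + 1) * (μ + 1 + a + b - 1) * (s * U * V * (Nm / (Oa * Ob * F))) := by
  have hd1 : P * Q * F ≠ 0 := mul_ne_zero (mul_ne_zero hP hQ) hF
  have hd2 : P * (a + kc) * (Q * (b + kc)) * ((kc + 1) * F) ≠ 0 :=
    mul_ne_zero (mul_ne_zero (mul_ne_zero hP hka) (mul_ne_zero hQ hkb)) (mul_ne_zero hk hF)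
  have hd3 : Oa * Ob * F ≠ 0 := mul_ne_zero (mul_ne_zero hOa hOb) hF
  simp only [← mul_div_assoc, div_mul_eq_mul_div]
  rw [div_sub_div _ _ hd1 hd2, ← add_div, div_eq_div_iff (mul_ne_zero hd1 hd2) hd3]
  linear_combination
    (s * -1 * U * V * R * F *
        (P * (a + kc) * (Q * (b + kc)) * ((kc + 1) * F) -
          (-(μ + 1) + kc) * (kc + 1) ^ 2 * (P * Q * F))) * hW +
    (-((μ + 1) + a + b - 1) * s * U * V * (P * Q * F) *
        (P * (a + kc) * (Q * (b + kc)) * ((kc + 1) * F))) * hNm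

/-! ### the coefficient identities at the `pochC` level -/

lemma sc_odd_zero (a b : ℂ) (m : ℕ) :
    (-1 : ℂ) ^ (m + 1) * pochC a (m + 1) * pochC b (m + 1) *
        (pochC (-((m : ℂ) + 1)) 0 /
          (pochC a 0 * pochC b 0 * ((Nat.factorial 0 : ℕ) : ℂ))) +
      ((m : ℂ) + a) * ((m : ℂ) + b) *
        ((-1 : ℂ) ^ m * pochC a m * pochC b m *
          (pochC (-(m : ℂ)) 0 /
            (pochC a 0 * pochC b 0 * ((Nat.factorial 0 : ℕ) : ℂ)))) = 0 := by
  simp only [pochC_zero, pochC_succ, pow_succ, Nat.factorial_zero, Nat.cast_one]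
  ring

lemma sc_odd_succ (a b : ℂ) (ha : 0 < a.re) (hb : 0 < b.re) (m j : ℕ) :
    (-1 : ℂ) ^ m * pochC (1 + a) m * pochC (1 + b) m *
        (pochC (-(m : ℂ)) j /
          (pochC (1 + a) j * pochC (1 + b) j * (j.factorial : ℂ)))
    = (-1 : ℂ) ^ (m + 1) * pochC a (m + 1) * pochC b (m + 1) *
        (pochC (-((m : ℂ) + 1)) (j + 1) /
          (pochC a (j + 1) * pochC b (j + 1) * ((j + 1).factorial : ℂ))) +
      ((m : ℂ) + a) * ((m : ℂ) + b) *
        ((-1 : ℂ) ^ m * pochC a m * pochC b m *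
          (pochC (-(m : ℂ)) (j + 1) /
            (pochC a (j + 1) * pochC b (j + 1) * ((j + 1).factorial : ℂ)))) := by
  have ha' : a ≠ 0 := ne_zero_of_re ha
  have hb' : b ≠ 0 := ne_zero_of_re hb
  have ha1 : (0:ℝ) < (1 + a).re := by simp; linarith
  have hb1 : (0:ℝ) < (1 + b).re := by simp; linarith
  have e3 : pochC (-((m : ℂ) + 1)) (j + 1) = -((m : ℂ) + 1) * pochC (-(m : ℂ)) j := by
    rw [pochC_succ_left, show (1 + -((m : ℂ) + 1)) = -(m : ℂ) by ring]
  have hfac : (((j + 1).factorial : ℕ) : ℂ) = ((j : ℂ) + 1) * ((j.factorial : ℕ) : ℂ) := by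
    rw [Nat.factorial_succ]; push_cast; ring
  rw [e3, pochC_succ (-(m : ℂ)) j, pochC_succ_left a m, pochC_succ_left b m,
    pochC_succ_left a j, pochC_succ_left b j, hfac, pow_succ]
  have hW : ((m : ℂ) + a) * pochC a m * (((m : ℂ) + b) * pochC b m)
      = a * pochC (1 + a) m * (b * pochC (1 + b) m) := by
    rw [pochC_shift a m, pochC_shift b m]
  exact odd_alg a b m j ((-1) ^ m) (pochC (1 + a) j) (pochC (1 + b) j) (pochC (-(m : ℂ)) j)
    (pochC (1 + a) m) (pochC (1 + b) m) (j.factorial : ℂ) (pochC a m) (pochC b m)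
    ha' hb' (pochC_ne_zero ha1 j) (pochC_ne_zero hb1 j) (fact_ne_zero j)
    (Nat.cast_add_one_ne_zero j) hW

lemma sc_even (a b : ℂ) (ha : 0 < a.re) (hb : 0 < b.re) (m k : ℕ) :
    (-1 : ℂ) ^ (m + 1) * pochC a (m + 1) * pochC b (m + 1) *
        (pochC (-((m : ℂ) + 1)) k / (pochC a k * pochC b k * (k.factorial : ℂ))) -
      (-1 : ℂ) ^ (m + 1) * pochC a (m + 1) * pochC b (m + 1) *
        (pochC (-((m : ℂ) + 1)) (k + 1) /
          (pochC a (k + 1) * pochC b (k + 1) * ((k + 1).factorial : ℂ))) * ((k : ℂ) + 1) ^ 2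
    = (-1 : ℂ) ^ (m + 1) * pochC (1 + a) (m + 1) * pochC (1 + b) (m + 1) *
        (pochC (-((m : ℂ) + 1)) k /
          (pochC (1 + a) k * pochC (1 + b) k * (k.factorial : ℂ))) +
      ((m : ℂ) + 1) * ((m : ℂ) + 1 + a + b - 1) *
        ((-1 : ℂ) ^ m * pochC (1 + a) m * pochC (1 + b) m *
          (pochC (-(m : ℂ)) k /
            (pochC (1 + a) k * pochC (1 + b) k * (k.factorial : ℂ)))) := by
  have ha' : a ≠ 0 := ne_zero_of_re ha
  have hb' : b ≠ 0 := ne_zero_of_re hb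
  have ha1 : (0:ℝ) < (1 + a).re := by simp; linarith
  have hb1 : (0:ℝ) < (1 + b).re := by simp; linarith
  have hfac : (((k + 1).factorial : ℕ) : ℂ) = ((k : ℂ) + 1) * ((k.factorial : ℕ) : ℂ) := by
    rw [Nat.factorial_succ]; push_cast; ring
  have hW : a * pochC (1 + a) k * (b * pochC (1 + b) k)
      = ((k : ℂ) + a) * pochC a k * (((k : ℂ) + b) * pochC b k) := by
    rw [pochC_shift a k, pochC_shift b k]
  have hNm : ((k : ℂ) - ((m : ℂ) + 1)) * pochC (-((m : ℂ) + 1)) k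
      = -((m : ℂ) + 1) * pochC (-(m : ℂ)) k := by
    have h := pochC_shift (-((m : ℂ) + 1)) k
    rw [show (1 + -((m : ℂ) + 1)) = -(m : ℂ) by ring] at h
    linear_combination h
  rw [pochC_succ (-((m : ℂ) + 1)) k, pochC_succ a k, pochC_succ b k,
    pochC_succ_left a m, pochC_succ_left b m, pochC_succ (1 + a) m, pochC_succ (1 + b) m,
    hfac, pow_succ]
  exact even_alg a b m k ((-1) ^ m) (pochC a k) (pochC b k) (pochC (-((m : ℂ) + 1)) k)
    (pochC (1 + a) m) (pochC (1 + b) m) (k.factorial : ℂ) (pochC (1 + a) k)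
    (pochC (1 + b) k) (pochC (-(m : ℂ)) k)
    (pochC_ne_zero ha k) (pochC_ne_zero hb k) (fact_ne_zero k)
    (Nat.cast_add_one_ne_zero k) (nat_add_ne_zero ha k |> fun h => by
      intro h2; exact h (by linear_combination h2)) (nat_add_ne_zero hb k |> fun h => by
      intro h2; exact h (by linear_combination h2))
    (pochC_ne_zero ha1 k) (pochC_ne_zero hb1 k) hW hNm

lemma rec_odd (a b : ℂ) (ha : 0 < a.re) (hb : 0 < b.re) (m : ℕ) :
    X * symBI a b (2*m+1)
      = symBI a b (2*m+1+1) + C (symBItau a b (2*m+1)) * symBI a b (2*m+1-1) := by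
  rw [show 2*m+1+1 = 2*(m+1) by ring, show 2*m+1-1 = 2*m by omega,
    symBI_odd_eq a b m, symBI_even_eq a b (m+1), symBI_even_eq a b m, tau_odd a b m]
  simp only [Nat.cast_add, Nat.cast_one]
  trans (∑ k ∈ range (m+1),
      C ((-1:ℂ)^m * pochC (1+a) m * pochC (1+b) m *
        (pochC (-(m:ℂ)) k / (pochC (1+a) k * pochC (1+b) k * (k.factorial : ℂ)))) * Qp (k+1))
  · simp only [Finset.mul_sum]
    refine Finset.sum_congr rfl fun k _ => ?_
    rw [← XPQ k]
    simp only [C_mul]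
    ring
  trans (∑ k ∈ range (m+1),
      C ((-1:ℂ)^(m+1) * pochC a (m+1) * pochC b (m+1) *
          (pochC (-((m:ℂ)+1)) (k+1) /
            (pochC a (k+1) * pochC b (k+1) * ((k+1).factorial : ℂ))) +
        ((m:ℂ)+a) * ((m:ℂ)+b) *
          ((-1:ℂ)^m * pochC a m * pochC b m *
            (pochC (-(m:ℂ)) (k+1) /
              (pochC a (k+1) * pochC b (k+1) * ((k+1).factorial : ℂ))))) * Qp (k+1))
  · exact Finset.sum_congr rfl fun k _ => by rw [sc_odd_succ a b ha hb m k]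
  trans (∑ k ∈ range (m+1+1),
      C ((-1:ℂ)^(m+1) * pochC a (m+1) * pochC b (m+1) *
          (pochC (-((m:ℂ)+1)) k / (pochC a k * pochC b k * (k.factorial : ℂ))) +
        ((m:ℂ)+a) * ((m:ℂ)+b) *
          ((-1:ℂ)^m * pochC a m * pochC b m *
            (pochC (-(m:ℂ)) k / (pochC a k * pochC b k * (k.factorial : ℂ))))) * Qp k)
  · conv_rhs => rw [Finset.sum_range_succ']
    rw [sc_odd_zero a b m]
    simp
  · have hext : ∑ k ∈ range (m+1+1),
        C (pochC (-(m:ℂ)) k / (pochC a k * pochC b k * (k.factorial : ℂ))) * Qp k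
        = ∑ k ∈ range (m+1),
        C (pochC (-(m:ℂ)) k / (pochC a k * pochC b k * (k.factorial : ℂ))) * Qp k := by
      rw [Finset.sum_range_succ, pochC_neg_nat m]
      simp
    rw [← hext]
    simp only [Finset.mul_sum, ← Finset.sum_add_distrib]
    refine Finset.sum_congr rfl fun k _ => ?_
    simp only [C_add, C_mul]
    ring

lemma rec_even (a b : ℂ) (ha : 0 < a.re) (hb : 0 < b.re) (m : ℕ) :
    X * symBI a b (2*m+2)
      = symBI a b (2*m+2+1) + C (symBItau a b (2*m+2)) * symBI a b (2*m+2-1) := by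
  rw [show 2*m+2 = 2*(m+1) by ring]
  rw [show 2*(m+1)+1 = 2*(m+1)+1 from rfl, show 2*(m+1)-1 = 2*m+1 by omega,
    symBI_even_eq a b (m+1), symBI_odd_eq a b (m+1), symBI_odd_eq a b m, tau_even2 a b m]
  simp only [Nat.cast_add, Nat.cast_one]
  -- abbreviations (only in comments):
  -- cE k := (-1)^(m+1) * pochC a (m+1) * pochC b (m+1) *
  --           (pochC (-(↑m+1)) k / (pochC a k * pochC b k * ↑k.factorial))
  trans (∑ k ∈ range (m+1+1),
      C ((-1:ℂ)^(m+1) * pochC a (m+1) * pochC b (m+1) *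
        (pochC (-((m:ℂ)+1)) k / (pochC a k * pochC b k * (k.factorial : ℂ)))) * (X * Qp k))
  · simp only [Finset.mul_sum]
    refine Finset.sum_congr rfl fun k _ => ?_
    simp only [C_mul]
    ring
  trans (∑ k ∈ range (m+1+1),
      C ((-1:ℂ)^(m+1) * pochC a (m+1) * pochC b (m+1) *
        (pochC (-((m:ℂ)+1)) k / (pochC a k * pochC b k * (k.factorial : ℂ)))) * Op k
    - ∑ k ∈ range (m+1+1),
      C ((-1:ℂ)^(m+1) * pochC a (m+1) * pochC b (m+1) *
          (pochC (-((m:ℂ)+1)) (k+1) /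
            (pochC a (k+1) * pochC b (k+1) * ((k+1).factorial : ℂ))) * ((k:ℂ)+1)^2) * Op k)
  · conv_lhs => rw [Finset.sum_range_succ']
    rw [XQ0]
    have hs : ∀ j : ℕ,
        C ((-1:ℂ)^(m+1) * pochC a (m+1) * pochC b (m+1) *
          (pochC (-((m:ℂ)+1)) (j+1) /
            (pochC a (j+1) * pochC b (j+1) * ((j+1).factorial : ℂ)))) * (X * Qp (j+1))
        = C ((-1:ℂ)^(m+1) * pochC a (m+1) * pochC b (m+1) *
            (pochC (-((m:ℂ)+1)) (j+1) /
              (pochC a (j+1) * pochC b (j+1) * ((j+1).factorial : ℂ)))) * Op (j+1)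
          - C ((-1:ℂ)^(m+1) * pochC a (m+1) * pochC b (m+1) *
              (pochC (-((m:ℂ)+1)) (j+1) /
                (pochC a (j+1) * pochC b (j+1) * ((j+1).factorial : ℂ))) * ((j:ℂ)+1)^2) *
            Op j := fun j => by
      rw [XQsucc j]
      simp only [C_mul]
      ring
    have hsum : ∑ j ∈ range (m+1),
        C ((-1:ℂ)^(m+1) * pochC a (m+1) * pochC b (m+1) *
          (pochC (-((m:ℂ)+1)) (j+1) /
            (pochC a (j+1) * pochC b (j+1) * ((j+1).factorial : ℂ)))) * (X * Qp (j+1))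
        = ∑ j ∈ range (m+1),
          (C ((-1:ℂ)^(m+1) * pochC a (m+1) * pochC b (m+1) *
            (pochC (-((m:ℂ)+1)) (j+1) /
              (pochC a (j+1) * pochC b (j+1) * ((j+1).factorial : ℂ)))) * Op (j+1)
          - C ((-1:ℂ)^(m+1) * pochC a (m+1) * pochC b (m+1) *
              (pochC (-((m:ℂ)+1)) (j+1) /
                (pochC a (j+1) * pochC b (j+1) * ((j+1).factorial : ℂ))) * ((j:ℂ)+1)^2) *
            Op j) := Finset.sum_congr rfl fun j _ => hs j
    rw [hsum, Finset.sum_sub_distrib]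
    -- now: (∑ shifted Op-sum − ∑ subtractor) + f0·Op 0 = full Op-sum − full subtractor
    rw [sub_add_eq_add_sub]
    refine congr_arg₂ HSub.hSub ?_ ?_
    · exact (Finset.sum_range_succ'
        (fun k => C ((-1:ℂ)^(m+1) * pochC a (m+1) * pochC b (m+1) *
          (pochC (-((m:ℂ)+1)) k / (pochC a k * pochC b k * (k.factorial : ℂ)))) * Op k)
        (m+1)).symm
    · rw [Finset.sum_range_succ
        (fun k => C ((-1:ℂ)^(m+1) * pochC a (m+1) * pochC b (m+1) *
          (pochC (-((m:ℂ)+1)) (k+1) /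
            (pochC a (k+1) * pochC b (k+1) * ((k+1).factorial : ℂ))) * ((k:ℂ)+1)^2) * Op k)
        (m+1)]
      rw [pochC_neg_succ m]
      simp
  trans (∑ k ∈ range (m+1+1),
      C ((-1:ℂ)^(m+1) * pochC a (m+1) * pochC b (m+1) *
          (pochC (-((m:ℂ)+1)) k / (pochC a k * pochC b k * (k.factorial : ℂ)))
        - (-1:ℂ)^(m+1) * pochC a (m+1) * pochC b (m+1) *
          (pochC (-((m:ℂ)+1)) (k+1) /
            (pochC a (k+1) * pochC b (k+1) * ((k+1).factorial : ℂ))) * ((k:ℂ)+1)^2) * Op k)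
  · rw [← Finset.sum_sub_distrib]
    refine Finset.sum_congr rfl fun k _ => ?_
    rw [C_sub]
    ring
  trans (∑ k ∈ range (m+1+1),
      C ((-1:ℂ)^(m+1) * pochC (1+a) (m+1) * pochC (1+b) (m+1) *
          (pochC (-((m:ℂ)+1)) k /
            (pochC (1+a) k * pochC (1+b) k * (k.factorial : ℂ)))
        + ((m:ℂ)+1) * ((m:ℂ)+1+a+b-1) *
          ((-1:ℂ)^m * pochC (1+a) m * pochC (1+b) m *
            (pochC (-(m:ℂ)) k /
              (pochC (1+a) k * pochC (1+b) k * (k.factorial : ℂ))))) * Op k)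
  · exact Finset.sum_congr rfl fun k _ => by rw [sc_even a b ha hb m k]
  · have hext : ∑ k ∈ range (m+1+1),
        C (pochC (-(m:ℂ)) k /
          (pochC (1+a) k * pochC (1+b) k * (k.factorial : ℂ))) * Pp k
        = ∑ k ∈ range (m+1),
        C (pochC (-(m:ℂ)) k /
          (pochC (1+a) k * pochC (1+b) k * (k.factorial : ℂ))) * Pp k := by
      rw [Finset.sum_range_succ, pochC_neg_nat m]
      simp
    rw [← hext]
    simp only [Finset.mul_sum, ← Finset.sum_add_distrib]
    refine Finset.sum_congr rfl fun k _ => ?_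
    simp only [Op, C_add, C_mul]
    ring

/-- the explicit symmetric Bannai–Ito polynomials satisfy the symmetric
monic three-term recurrence `x Ŝₙ = Ŝ_{n+1} + τₙ Ŝ_{n-1}` (and `x Ŝ₀ = Ŝ₁`). -/
theorem symBannaiIto_recurrence (a b : ℂ) (ha : a.re > 0) (hb : b.re > 0) :
    (∀ n : ℕ, 1 ≤ n →
      X * symBI a b n = symBI a b (n + 1) + C (symBItau a b n) * symBI a b (n - 1)) ∧
    X * symBI a b 0 = symBI a b 1 := by
  constructor
  · intro n hn
    rcases Nat.even_or_odd n with ⟨t, ht⟩ | ⟨t, ht⟩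
    · obtain ⟨s, rfl⟩ : ∃ s, n = 2*s+2 := ⟨t - 1, by omega⟩
      exact rec_even a b ha hb s
    · obtain rfl : n = 2*t+1 := ht
      exact rec_odd a b ha hb t
  · have h0 : symBI a b 0 = 1 := by
      norm_num [symBI, pochC_zero]
    have h1 : symBI a b 1 = X := by
      have hne : ¬ Even 1 := by decide
      norm_num [symBI, hne, pochC_zero, Finset.Icc_eq_empty (show ¬ (1:ℕ) ≤ 0 by omega)]
    rw [h0, h1, mul_one]
end

section
/- Let α > −1 and β > 0, and fix n ∈ ℕ and x ∈ ℝ. Then lim_{h→∞} h^{−n}·Î_n(h·x; (β+1)/2 + ih, (β+1)/2 − ih, α+1) = G_n(x;α,β), where the limit is over real h → +∞, Î_n are the generalized symmetric Bannai–Ito polynomials and G_n(x;α,β) are the monic generalized Gegenbauer polynomials. -/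
open Polynomial Finset Complex Filter

/-- The generalized symmetric Bannai–Ito polynomials `Îₙ(x;a,b,c)`, given by their
Wilson-type terminating ₄F₃ hypergeometric expressions. -/
noncomputable def gsBI (a b c : ℂ) (n : ℕ) : Polynomial ℂ :=
  let m : ℕ := n / 2
  if Even n then
    C ((-1 : ℂ) ^ m * pochC a m * pochC b m * pochC c m /
        pochC ((m : ℂ) + a + b + c - 1) m) *
      ∑ k ∈ range (m + 1),
        C (pochC (-(m : ℂ)) k * pochC ((m : ℂ) + a + b + c - 1) k /
            (pochC a k * pochC b k * pochC c k * (k.factorial : ℂ))) *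
          ∏ j ∈ range k, (C ((j : ℂ) ^ 2) + X ^ 2)
  else
    C ((-1 : ℂ) ^ m * pochC (1 + a) m * pochC (1 + b) m * pochC (1 + c) m /
        pochC ((m : ℂ) + a + b + c) m) * X *
      ∑ k ∈ range (m + 1),
        C (pochC (-(m : ℂ)) k * pochC ((m : ℂ) + a + b + c) k /
            (pochC (1 + a) k * pochC (1 + b) k * pochC (1 + c) k * (k.factorial : ℂ))) *
          ∏ j ∈ Icc 1 k, (C ((j : ℂ) ^ 2) + X ^ 2)

/-- The recurrence coefficients `σₙ` of the monic generalized Gegenbauer polynomials. -/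
noncomputable def genGegenbauerSigma (α β : ℝ) (n : ℕ) : ℝ :=
  let m : ℕ := n / 2
  if Even n then
    (m : ℝ) * ((m : ℝ) + β) / ((2 * (m : ℝ) + α + β) * (2 * (m : ℝ) + α + β + 1))
  else
    ((m : ℝ) + α + 1) * ((m : ℝ) + α + β + 1) /
      ((2 * (m : ℝ) + α + β + 1) * (2 * (m : ℝ) + α + β + 2))

/-- Monic generalized Gegenbauer polynomials, shifted so that
`genGegenbauer α β (n+1) = Gₙ` (`genGegenbauer α β 0 = G₋₁ = 0`). -/
noncomputable def genGegenbauer (α β : ℝ) : ℕ → Polynomial ℝ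
  | 0 => 0
  | 1 => 1
  | (k + 2) =>
      X * genGegenbauer α β (k + 1) - C (genGegenbauerSigma α β k) * genGegenbauer α β k

noncomputable def poch (a : ℝ) (k : ℕ) : ℝ := (ascPochhammer ℝ k).eval a

lemma poch_zero (a : ℝ) : poch a 0 = 1 := by simp [poch]
lemma poch_succ (a : ℝ) (k : ℕ) : poch a (k+1) = poch a k * (a + k) :=
  ascPochhammer_succ_eval k a
lemma poch_succ_left (a : ℝ) (k : ℕ) : poch a (k+1) = a * poch (a+1) k := by
  simp [poch, ascPochhammer_succ_left, Polynomial.eval_mul, eval_comp]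
lemma poch_pos {a : ℝ} (ha : 0 < a) (k : ℕ) : 0 < poch a k := ascPochhammer_pos k a ha
lemma poch_shift (a : ℝ) (k : ℕ) : a * poch (a+1) k = poch a k * (a + k) := by
  induction k with
  | zero => simp [poch_zero]
  | succ k ih => rw [poch_succ, poch_succ, ← mul_assoc, ih]; push_cast; ring
lemma poch_neg_nat {m k : ℕ} (h : m < k) : poch (-(m:ℝ)) k = 0 := by
  induction k with
  | zero => omega
  | succ k ih =>
    rcases Nat.lt_or_ge m k with h' | h'
    · rw [poch_succ, ih h', zero_mul]
    · have : m = k := by omega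
      subst this
      rw [poch_succ]; simp

noncomputable def eco (α β : ℝ) (m k : ℕ) : ℝ :=
  poch (-(m:ℝ)) k * poch ((m:ℝ)+α+β+1) k / (poch (α+1) k * k.factorial)
noncomputable def oco (α β : ℝ) (m k : ℕ) : ℝ :=
  poch (-(m:ℝ)) k * poch ((m:ℝ)+α+β+2) k / (poch (α+2) k * k.factorial)
noncomputable def Apre (α β : ℝ) (m : ℕ) : ℝ :=
  (-1:ℝ)^m * poch (α+1) m / poch ((m:ℝ)+α+β+1) m
noncomputable def Bpre (α β : ℝ) (m : ℕ) : ℝ :=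
  (-1:ℝ)^m * poch (α+2) m / poch ((m:ℝ)+α+β+2) m
noncomputable def Efun (α β : ℝ) (m : ℕ) (x : ℝ) : ℝ :=
  Apre α β m * ∑ k ∈ range (m+1), eco α β m k * x^(2*k)
noncomputable def Ofun (α β : ℝ) (m : ℕ) (x : ℝ) : ℝ :=
  Bpre α β m * ∑ k ∈ range (m+1), oco α β m k * x^(2*k+1)

lemma Efun_zero (α β x : ℝ) : Efun α β 0 x = 1 := by
  simp [Efun, Apre, eco, poch_zero]
lemma Ofun_zero (α β x : ℝ) : Ofun α β 0 x = x := by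
  simp [Ofun, Bpre, oco, poch_zero]

lemma sigma_odd (α β : ℝ) (m : ℕ) : genGegenbauerSigma α β (2*m+1) =
    ((m:ℝ)+α+1) * ((m:ℝ)+α+β+1) / ((2*(m:ℝ)+α+β+1) * (2*(m:ℝ)+α+β+2)) := by
  have h1 : ¬ Even (2*m+1) := by simp [Nat.even_add_one, Nat.even_iff]
  have h2 : (2*m+1)/2 = m := by omega
  simp only [genGegenbauerSigma, h2, if_neg h1]

lemma sigma_even (α β : ℝ) (m : ℕ) : genGegenbauerSigma α β (2*m) =
    (m:ℝ) * ((m:ℝ)+β) / ((2*(m:ℝ)+α+β) * (2*(m:ℝ)+α+β+1)) := by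
  have h1 : Even (2*m) := ⟨m, by omega⟩
  have h2 : (2*m)/2 = m := by omega
  simp only [genGegenbauerSigma, h2, if_pos h1]
lemma poch_shift_div {a : ℝ} (ha : a ≠ 0) (k : ℕ) :
    poch (a+1) k = poch a k * (a+k) / a := by
  rw [eq_div_iff ha, mul_comm _ a, poch_shift]

set_option maxHeartbeats 1000000 in
lemma key1 (α β : ℝ) (hα : α > -1) (hβ : β > 0) (m : ℕ) (x : ℝ) :
    Efun α β (m+1) x = x * Ofun α β m x
      - genGegenbauerSigma α β (2*m+1) * Efun α β m x := by
  have hm0 : (0:ℝ) ≤ (m:ℝ) := Nat.cast_nonneg m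
  have hα1 : (0:ℝ) < α + 1 := by linarith
  have hS : (0:ℝ) < (m:ℝ)+α+β+1 := by linarith
  have hQ : (0:ℝ) < poch ((m:ℝ)+α+β+1) m := poch_pos hS m
  have hP : (0:ℝ) < poch (α+1) m := poch_pos hα1 m
  have l1 : (0:ℝ) < 2*(m:ℝ)+α+β+1 := by linarith
  have l2 : (0:ℝ) < 2*(m:ℝ)+α+β+2 := by linarith
  set σ : ℝ := genGegenbauerSigma α β (2*m+1) with hσdef
  have hσ : σ = ((m:ℝ)+α+1) * ((m:ℝ)+α+β+1) / ((2*(m:ℝ)+α+β+1) * (2*(m:ℝ)+α+β+2)) :=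
    sigma_odd α β m
  have hc0 : Apre α β (m+1) = - (σ * Apre α β m) := by
    simp only [Apre, hσ]
    push_cast
    rw [show ((m:ℝ)+1+α+β+1) = ((m:ℝ)+α+β+1)+1 from by ring,
      poch_shift_div (ne_of_gt hS) (m+1), poch_succ ((m:ℝ)+α+β+1) m,
      poch_succ (α+1) m, pow_succ]
    have e1 : (m:ℝ)*2+α+β+1 ≠ 0 := ne_of_gt (by linarith)
    have e2 : (m:ℝ)*2+α+β+2 ≠ 0 := ne_of_gt (by linarith)
    field_simp
    push_cast
    ring
  have hcj : ∀ j, eco α β (m+1) (j+1) * Apre α β (m+1)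
      = Bpre α β m * oco α β m j - σ * (Apre α β m * eco α β m (j+1)) := by
    intro j
    have hj0 : (0:ℝ) ≤ (j:ℝ) := Nat.cast_nonneg j
    have hr : (0:ℝ) < poch (α+1) j := poch_pos hα1 j
    have hq : (0:ℝ) < poch ((m:ℝ)+α+β+1) j := poch_pos hS j
    have hf : (0:ℝ) < (j.factorial : ℝ) := by positivity
    simp only [eco, oco, Apre, Bpre, hσ, Nat.factorial_succ]
    push_cast
    rw [show (-((m:ℝ)+1)) = (-(m:ℝ)-1) from by ring]
    rw [show ((m:ℝ)+1+α+β+1) = ((m:ℝ)+α+β+1)+1 from by ring]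
    rw [show ((m:ℝ)+α+β+2) = ((m:ℝ)+α+β+1)+1 from by ring]
    rw [show (α+2 : ℝ) = (α+1)+1 from by ring]
    rw [poch_succ_left (-(m:ℝ)-1) j]
    rw [show (-(m:ℝ)-1+1) = -(m:ℝ) from by ring]
    rw [poch_succ (-(m:ℝ)) j]
    rw [poch_succ (((m:ℝ)+α+β+1)+1) j, poch_succ ((m:ℝ)+α+β+1) j,
      poch_succ (α+1) j]
    rw [poch_shift_div (ne_of_gt hS) (m+1), poch_succ ((m:ℝ)+α+β+1) m]
    rw [poch_shift_div (ne_of_gt hS) j, poch_shift_div (ne_of_gt hα1) j,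
      poch_shift_div (ne_of_gt hS) m, poch_shift_div (ne_of_gt hα1) m]
    rw [poch_succ (α+1) m, pow_succ]
    push_cast
    generalize poch (-(m:ℝ)) j = p
    generalize hqv : poch ((m:ℝ)+α+β+1) j = q
    generalize hrv : poch (α+1) j = r at hr
    generalize hPv : poch (α+1) m = P at hP
    generalize hQv : poch ((m:ℝ)+α+β+1) m = Q at hQ
    generalize hfv : (j.factorial : ℝ) = F at hf
    generalize hmv : (m:ℝ) = M at *
    generalize hjv : (j:ℝ) = J at *
    simp only [div_eq_mul_inv, mul_inv, inv_inv]
    have hne1 : (M+α+β+1) ≠ 0 := ne_of_gt hS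
    have hne2 : (α+1) ≠ 0 := ne_of_gt hα1
    have hne3 : (J+1 : ℝ) ≠ 0 := by linarith
    have hne4 : (M+α+β+1+M) ≠ 0 := by intro h; nlinarith
    have hne5 : (M+α+β+1+1+M) ≠ 0 := by intro h; nlinarith
    have hne6 : (2*M+α+β+1) ≠ 0 := ne_of_gt l1
    have hne7 : (2*M+α+β+2) ≠ 0 := ne_of_gt l2
    have h : (-M-1) * (M+α+β+1+1+J) * (J+1)⁻¹ * (-1) * (α+1+M) * (M+α+β+1+M)⁻¹ *
          (M+α+β+1+(M+1))⁻¹ * (M+α+β+1)⁻¹ * (M+α+β+1)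
        = (α+1+M) * (α+1)⁻¹ * (M+α+β+1+M)⁻¹ * (M+α+β+1) * (M+α+β+1)⁻¹ * (α+1)
          - (M+α+1) * (M+α+β+1) * (2*M+α+β+1)⁻¹ * (2*M+α+β+2)⁻¹ * (-M+J) * (J+1)⁻¹ := by
      rw [show M+α+β+1+M = 2*M+α+β+1 from by ring,
        show M+α+β+1+(M+1) = 2*M+α+β+2 from by ring]
      have e1 : M*2+α+β+1 ≠ 0 := ne_of_gt (by linarith)
      have e2 : M*2+α+β+2 ≠ 0 := ne_of_gt (by linarith)
      field_simp
      ring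
    linear_combination ((-1:ℝ)^m * p * q * P * r⁻¹ * F⁻¹ * Q⁻¹ *
      (M+α+β+1+J) * (α+1+J)⁻¹) * h
  -- assembly
  have he0a : eco α β (m+1) 0 = 1 := by simp [eco, poch_zero]
  have he0b : eco α β m 0 = 1 := by simp [eco, poch_zero]
  have hext : ∑ k ∈ range (m+1), eco α β m k * x^(2*k)
      = ∑ k ∈ range ((m+1)+1), eco α β m k * x^(2*k) := by
    rw [Finset.sum_range_succ (fun k => eco α β m k * x^(2*k)) (m+1)]
    have hz : eco α β m (m+1) = 0 := by
      simp [eco, poch_neg_nat (Nat.lt_succ_self m)]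
    rw [hz]; ring
  have h1 : Apre α β (m+1) * ∑ j ∈ range (m+1), eco α β (m+1) (j+1) * x^(2*(j+1))
      = ∑ j ∈ range (m+1), (x * (Bpre α β m * (oco α β m j * x^(2*j+1)))
          - σ * (Apre α β m * (eco α β m (j+1) * x^(2*(j+1))))) := by
    rw [Finset.mul_sum]
    exact Finset.sum_congr rfl fun j _ => by linear_combination x^(2*j+2) * hcj j
  have hT := Finset.sum_sub_distrib (s := range (m+1))
    (f := fun j => x * (Bpre α β m * (oco α β m j * x^(2*j+1))))
    (g := fun j => σ * (Apre α β m * (eco α β m (j+1) * x^(2*(j+1)))))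
  have hS1 : x * (Bpre α β m * ∑ k ∈ range (m+1), oco α β m k * x^(2*k+1))
      = ∑ j ∈ range (m+1), x * (Bpre α β m * (oco α β m j * x^(2*j+1))) := by
    rw [Finset.mul_sum, Finset.mul_sum]
  have hS2 : σ * (Apre α β m * ∑ j ∈ range (m+1), eco α β m (j+1) * x^(2*(j+1)))
      = ∑ j ∈ range (m+1), σ * (Apre α β m * (eco α β m (j+1) * x^(2*(j+1)))) := by
    rw [Finset.mul_sum, Finset.mul_sum]
  rw [Efun, Ofun, Efun, hext,
    Finset.sum_range_succ' (fun k => eco α β (m+1) k * x^(2*k)) (m+1),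
    Finset.sum_range_succ' (fun k => eco α β m k * x^(2*k)) (m+1)]
  linear_combination h1 + hT - hS1 + hS2 + (x^(2*0)) * Apre α β (m+1) * he0a
    + (x^(2*0)) * (σ * Apre α β m) * he0b + (x^(2*0)) * hc0
set_option maxHeartbeats 1000000 in
lemma key2 (α β : ℝ) (hα : α > -1) (hβ : β > 0) (m : ℕ) (x : ℝ) :
    Ofun α β (m+1) x = x * Efun α β (m+1) x
      - genGegenbauerSigma α β (2*(m+1)) * Ofun α β m x := by
  have hm0 : (0:ℝ) ≤ (m:ℝ) := Nat.cast_nonneg m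
  have hα1 : (0:ℝ) < α + 1 := by linarith
  have hc : (0:ℝ) < (m:ℝ)+α+β+2 := by linarith
  have hmm : ((-(m:ℝ)-1) : ℝ) ≠ 0 := by intro h; nlinarith
  have hcm : ((m:ℝ)+α+β+2+(m:ℝ)) ≠ 0 := by intro h; nlinarith
  set σ : ℝ := genGegenbauerSigma α β (2*(m+1)) with hσdef
  have hσ : σ = ((m+1:ℕ):ℝ) * (((m+1:ℕ):ℝ)+β) /
      ((2*((m+1:ℕ):ℝ)+α+β) * (2*((m+1:ℕ):ℝ)+α+β+1)) := sigma_even α β (m+1)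
  have hBm : poch ((m:ℝ)+α+β+2) m = poch ((m:ℝ)+α+β+2) (m+1) / ((m:ℝ)+α+β+2+m) := by
    rw [poch_succ, mul_div_assoc, div_self hcm, mul_one]
  have hPm : poch ((α+1)+1) m = poch (α+1) (m+1) / (α+1) := by
    rw [poch_succ_left, mul_comm, mul_div_assoc, div_self (ne_of_gt hα1), mul_one]
  have hck : ∀ j, Bpre α β (m+1) * oco α β (m+1) j
      = Apre α β (m+1) * eco α β (m+1) j - σ * (Bpre α β m * oco α β m j) := by
    intro j
    have hj0 : (0:ℝ) ≤ (j:ℝ) := Nat.cast_nonneg j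
    have hr : (0:ℝ) < poch (α+1) j := poch_pos hα1 j
    have hq : (0:ℝ) < poch ((m:ℝ)+α+β+2) j := poch_pos hc j
    have hf : (0:ℝ) < (j.factorial : ℝ) := by positivity
    simp only [eco, oco, Apre, Bpre, hσ]
    push_cast
    rw [show (-((m:ℝ))) = (-(m:ℝ)-1)+1 from by ring]
    rw [show (-((m:ℝ)+1)) = (-(m:ℝ)-1) from by ring]
    rw [show ((m:ℝ)+1+α+β+1) = ((m:ℝ)+α+β+2) from by ring]
    rw [show ((m:ℝ)+1+α+β+2) = ((m:ℝ)+α+β+2)+1 from by ring]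
    rw [show (α+2 : ℝ) = (α+1)+1 from by ring]
    rw [poch_shift_div hmm j]
    rw [poch_shift_div (ne_of_gt hc) j, poch_shift_div (ne_of_gt hc) (m+1)]
    rw [poch_shift_div (ne_of_gt hα1) j, poch_shift_div (ne_of_gt hα1) (m+1)]
    rw [hBm, hPm, pow_succ]
    push_cast
    generalize poch (-(m:ℝ)-1) j = p
    generalize hqv : poch ((m:ℝ)+α+β+2) j = q
    generalize hrv : poch (α+1) j = r at hr
    generalize hPv : poch (α+1) (m+1) = P
    generalize hQv : poch ((m:ℝ)+α+β+2) (m+1) = D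
    generalize hfv : (j.factorial : ℝ) = F at hf
    generalize hmv : (m:ℝ) = M at *
    generalize hjv : (j:ℝ) = J at *
    simp only [div_eq_mul_inv, mul_inv, inv_inv]
    have n1 : (α+1:ℝ) ≠ 0 := ne_of_gt hα1
    have n2 : (α+1+J:ℝ) ≠ 0 := by intro h; nlinarith
    have n3 : (M+α+β+2:ℝ) ≠ 0 := ne_of_gt hc
    have n4 : (M+α+β+2+(M+1):ℝ) ≠ 0 := by intro h; nlinarith
    have n5 : (2*(M+1)+α+β:ℝ) ≠ 0 := by intro h; nlinarith
    have n6 : (2*(M+1)+α+β+1:ℝ) ≠ 0 := by intro h; nlinarith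
    have n7 : (-M-1:ℝ) ≠ 0 := hmm
    have n8 : (M+α+β+2+M:ℝ) ≠ 0 := hcm
    have h : (-1:ℝ) * (α+1+(M+1)) * (α+1)⁻¹ * (M+α+β+2+(M+1))⁻¹ * (M+α+β+2) *
          (M+α+β+2+J) * (M+α+β+2)⁻¹ * (α+1+J)⁻¹ * (α+1)
        = -1 - (M+1) * (M+1+β) * (2*(M+1)+α+β)⁻¹ * (2*(M+1)+α+β+1)⁻¹ * (α+1)⁻¹ *
            (M+α+β+2+M) * (-M-1+J) * (-M-1)⁻¹ * (α+1+J)⁻¹ * (α+1) := by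
      rw [show (M+α+β+2+(M+1):ℝ) = 2*(M+1)+α+β+1 from by ring,
        show (M+α+β+2+M:ℝ) = 2*(M+1)+α+β from by ring]
      have e1 : (M+1)*2+α+β ≠ 0 := ne_of_gt (by linarith)
      have e2 : (M+1)*2+α+β+1 ≠ 0 := ne_of_gt (by linarith)
      have e3 : M*2+α+β+2 ≠ 0 := ne_of_gt (by linarith)
      have e4 : M*2+α+β+3 ≠ 0 := ne_of_gt (by linarith)
      field_simp
      ring
    linear_combination ((-1:ℝ)^m * p * q * P * D⁻¹ * r⁻¹ * F⁻¹) * h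
  have hext : ∑ k ∈ range (m+1), oco α β m k * x^(2*k+1)
      = ∑ k ∈ range ((m+1)+1), oco α β m k * x^(2*k+1) := by
    rw [Finset.sum_range_succ (fun k => oco α β m k * x^(2*k+1)) (m+1)]
    have hz : oco α β m (m+1) = 0 := by
      simp [oco, poch_neg_nat (Nat.lt_succ_self m)]
    rw [hz]; ring
  have h1 : Bpre α β (m+1) * ∑ k ∈ range ((m+1)+1), oco α β (m+1) k * x^(2*k+1)
      = ∑ k ∈ range ((m+1)+1), (x * (Apre α β (m+1) * (eco α β (m+1) k * x^(2*k)))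
          - σ * (Bpre α β m * (oco α β m k * x^(2*k+1)))) := by
    rw [Finset.mul_sum]
    exact Finset.sum_congr rfl fun k _ => by linear_combination x^(2*k+1) * hck k
  have hT := Finset.sum_sub_distrib (s := range ((m+1)+1))
    (f := fun k => x * (Apre α β (m+1) * (eco α β (m+1) k * x^(2*k))))
    (g := fun k => σ * (Bpre α β m * (oco α β m k * x^(2*k+1))))
  have hS1 : x * (Apre α β (m+1) * ∑ k ∈ range ((m+1)+1), eco α β (m+1) k * x^(2*k))
      = ∑ k ∈ range ((m+1)+1), x * (Apre α β (m+1) * (eco α β (m+1) k * x^(2*k))) := by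
    rw [Finset.mul_sum, Finset.mul_sum]
  have hS2 : σ * (Bpre α β m * ∑ k ∈ range ((m+1)+1), oco α β m k * x^(2*k+1))
      = ∑ k ∈ range ((m+1)+1), σ * (Bpre α β m * (oco α β m k * x^(2*k+1))) := by
    rw [Finset.mul_sum, Finset.mul_sum]
  rw [Ofun, Efun, Ofun, hext]
  linear_combination h1 + hT - hS1 + hS2
lemma EO_eq (α β : ℝ) (hα : α > -1) (hβ : β > 0) (m : ℕ) (x : ℝ) :
    Efun α β m x = (genGegenbauer α β (2*m+1)).eval x ∧
    Ofun α β m x = (genGegenbauer α β (2*m+2)).eval x := by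
  induction m with
  | zero =>
    constructor
    · simp [Efun_zero, genGegenbauer]
    · have : genGegenbauer α β 2 = X * genGegenbauer α β 1
          - C (genGegenbauerSigma α β 0) * genGegenbauer α β 0 := by
        simp [genGegenbauer]
      simp [Ofun_zero, this, genGegenbauer]
  | succ m ih =>
    have hE : Efun α β (m+1) x = (genGegenbauer α β (2*(m+1)+1)).eval x := by
      rw [show 2*(m+1)+1 = (2*m+1)+2 from by omega]
      have : genGegenbauer α β ((2*m+1)+2) = X * genGegenbauer α β ((2*m+1)+1)
          - C (genGegenbauerSigma α β (2*m+1)) * genGegenbauer α β (2*m+1) := by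
        simp [genGegenbauer]
      rw [this, key1 α β hα hβ m x]
      rw [show (2*m+1)+1 = 2*m+2 from by omega]
      simp [ih.1, ih.2]
    refine ⟨hE, ?_⟩
    rw [show 2*(m+1)+2 = (2*(m+1))+2 from by omega]
    have : genGegenbauer α β ((2*(m+1))+2) = X * genGegenbauer α β ((2*(m+1))+1)
        - C (genGegenbauerSigma α β (2*(m+1))) * genGegenbauer α β (2*(m+1)) := by
      simp [genGegenbauer]
    rw [this, key2 α β hα hβ m x]
    rw [show (2*(m+1))+1 = 2*(m+1)+1 from rfl, show 2*(m+1) = 2*m+2 from by omega]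
    simp [hE, ih.2]
    rw [show 2*(m+1)+1 = 2*m+1+2 from by omega] at hE ⊢
    simp [hE]

example (a b c d : ℂ) : a/(b*c)*d = a*b⁻¹*c⁻¹*d := by ring
example (h : ℝ) (m : ℕ) (D S p q : ℂ) :
    ((h:ℂ)^(2*m))⁻¹ * (p * D * q * S) = (p * q * (D / ((h:ℂ)^2)^m)) * S := by ring

lemma tendsto_inv_c : Tendsto (fun h : ℝ => ((h:ℂ))⁻¹) atTop (nhds 0) := by
  rw [tendsto_zero_iff_norm_tendsto_zero]
  have : ∀ h : ℝ, ‖((h:ℂ))⁻¹‖ = |h|⁻¹ := by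
    intro h; rw [norm_inv, Complex.norm_real, Real.norm_eq_abs]
  simp only [this]
  exact tendsto_inv_atTop_zero.comp (tendsto_abs_atTop_atTop)

lemma tendsto_inv_sq : Tendsto (fun h : ℝ => (((h:ℂ))^2)⁻¹) atTop (nhds 0) := by
  have := tendsto_inv_c.mul tendsto_inv_c
  simpa [mul_inv, sq] using this

lemma lim_ratio (c d u : ℝ) (hd : 0 ≤ d) :
    Tendsto (fun h : ℝ => (((c:ℝ):ℂ) + ((h:ℂ))^2*((u:ℝ):ℂ)) / (((d:ℝ):ℂ) + ((h:ℂ))^2))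
      atTop (nhds ((u:ℂ))) := by
  have hnum : Tendsto (fun h : ℝ => ((c:ℂ)) * (((h:ℂ))^2)⁻¹ + ((u:ℝ):ℂ))
      atTop (nhds ((u:ℂ))) := by
    have := (tendsto_const_nhds (x := ((c:ℝ):ℂ)) (f := atTop)).mul tendsto_inv_sq
    simpa using this.add (tendsto_const_nhds (x := ((u:ℝ):ℂ)))
  have hden : Tendsto (fun h : ℝ => ((d:ℂ)) * (((h:ℂ))^2)⁻¹ + 1)
      atTop (nhds 1) := by
    have := (tendsto_const_nhds (x := ((d:ℝ):ℂ)) (f := atTop)).mul tendsto_inv_sq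
    simpa using this.add (tendsto_const_nhds (x := (1:ℂ)))
  have := hnum.div hden one_ne_zero
  rw [div_one] at this
  apply this.congr'
  filter_upwards [eventually_ge_atTop (1:ℝ)] with h hh
  have hh0 : ((h:ℂ))^2 ≠ 0 := by
    have : (h:ℂ) ≠ 0 := by
      simp only [ne_eq, Complex.ofReal_eq_zero]
      intro hc; rw [hc] at hh; linarith
    exact pow_ne_zero 2 this
  have hden0 : ((d:ℂ)) + ((h:ℂ))^2 ≠ 0 := by
    have : ((d:ℂ)) + ((h:ℂ))^2 = ((d + h^2 : ℝ) : ℂ) := by push_cast; ring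
    rw [this]
    simp only [ne_eq, Complex.ofReal_eq_zero]
    intro hc; nlinarith
  simp only [Pi.div_apply]
  have hh1 : (h:ℂ) ≠ 0 := fun hc => hh0 (by rw [hc]; ring)
  field_simp
lemma pochC_prod (z : ℂ) (k : ℕ) : pochC z k = ∏ j ∈ range k, (z + j) := by
  induction k with
  | zero => simp [pochC]
  | succ k ih =>
    rw [pochC, ascPochhammer_succ_eval, ← pochC, ih, Finset.prod_range_succ]

lemma poch_prod (z : ℝ) (k : ℕ) : poch z k = ∏ j ∈ range k, (z + j) := by
  induction k with
  | zero => simp [poch]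
  | succ k ih => rw [poch_succ, ih, Finset.prod_range_succ]

lemma pochC_ofReal (r : ℝ) (k : ℕ) : pochC ((r:ℝ):ℂ) k = ((poch r k : ℝ) : ℂ) := by
  rw [pochC_prod, poch_prod]
  push_cast
  rfl

lemma pochC_conj_mul (w h : ℝ) (k : ℕ) :
    pochC ((w:ℂ) + I*(h:ℂ)) k * pochC ((w:ℂ) - I*(h:ℂ)) k
      = ∏ j ∈ range k, ((((w+(j:ℝ))^2 : ℝ):ℂ) + ((h:ℂ))^2) := by
  rw [pochC_prod, pochC_prod, ← Finset.prod_mul_distrib]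
  refine Finset.prod_congr rfl fun j _ => ?_
  have : (I:ℂ)^2 = -1 := Complex.I_sq
  push_cast
  linear_combination (-(h:ℂ)^2) * this
lemma gsBI_even (a b c : ℂ) (m : ℕ) : gsBI a b c (2*m) =
    C ((-1:ℂ)^m * pochC a m * pochC b m * pochC c m / pochC ((m:ℂ)+a+b+c-1) m) *
      ∑ k ∈ range (m+1), C (pochC (-(m:ℂ)) k * pochC ((m:ℂ)+a+b+c-1) k /
          (pochC a k * pochC b k * pochC c k * (k.factorial:ℂ))) *
        ∏ j ∈ range k, (C ((j:ℂ)^2) + X^2) := by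
  have h1 : Even (2*m) := ⟨m, by omega⟩
  have h2 : (2*m)/2 = m := by omega
  simp only [gsBI, h2, if_pos h1]

lemma even_lim (α β : ℝ) (m : ℕ) (x : ℝ) :
    Tendsto (fun h : ℝ => (((h:ℂ))^(2*m))⁻¹ *
        (gsBI (((β+1)/2 : ℝ) + I*(h:ℂ)) (((β+1)/2 : ℝ) - I*(h:ℂ)) ((α+1 : ℝ):ℂ) (2*m)).eval
          ((h*x : ℝ):ℂ))
      atTop (nhds (((Efun α β m x : ℝ)):ℂ)) := by
  set w : ℝ := (β+1)/2 with hw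
  -- individual factor limits
  have fac1 : ∀ j : ℕ, Tendsto (fun h : ℝ =>
      ((((w+(j:ℝ))^2 : ℝ):ℂ) + ((h:ℂ))^2) / ((h:ℂ))^2) atTop (nhds 1) := by
    intro j
    have := lim_ratio ((w+(j:ℝ))^2) 0 1 le_rfl
    rw [Complex.ofReal_one] at this
    exact this.congr fun h => by push_cast; ring_nf
  have fac2 : ∀ j : ℕ, Tendsto (fun h : ℝ =>
      (((j:ℂ))^2 + (((h*x : ℝ)):ℂ)^2) / ((((w+(j:ℝ))^2 : ℝ):ℂ) + ((h:ℂ))^2))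
      atTop (nhds (((x^2 : ℝ)):ℂ)) := by
    intro j
    have := lim_ratio ((j:ℝ)^2) ((w+(j:ℝ))^2) (x^2) (sq_nonneg _)
    exact this.congr fun h => by push_cast; ring_nf
  have TG : Tendsto (fun h : ℝ => ((Apre α β m : ℝ):ℂ) *
      ∏ j ∈ range m, (((((w+(j:ℝ))^2 : ℝ)):ℂ) + ((h:ℂ))^2) / ((h:ℂ))^2)
      atTop (nhds ((Apre α β m : ℝ):ℂ)) := by
    have := tendsto_const_nhds (x := ((Apre α β m : ℝ):ℂ)) (f := atTop) |>.mul
      (tendsto_finset_prod (range m) (fun j _ => fac1 j))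
    simpa using this
  have TS : Tendsto (fun h : ℝ => ∑ k ∈ range (m+1), ((eco α β m k : ℝ):ℂ) *
      ∏ j ∈ range k, ((((j:ℂ))^2 + (((h*x : ℝ)):ℂ)^2) /
        ((((w+(j:ℝ))^2 : ℝ):ℂ) + ((h:ℂ))^2)))
      atTop (nhds (∑ k ∈ range (m+1), ((eco α β m k : ℝ):ℂ) * (((x^2 : ℝ)):ℂ)^k)) := by
    refine tendsto_finset_sum _ fun k _ => ?_
    have := tendsto_const_nhds (x := ((eco α β m k : ℝ):ℂ)) (f := atTop) |>.mul
      (tendsto_finset_prod (range k) (fun j _ => fac2 j))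
    simpa [Finset.prod_const, Finset.card_range] using this
  have Tmodel := TG.mul TS
  have hval : ((Apre α β m : ℝ):ℂ) * (∑ k ∈ range (m+1), ((eco α β m k : ℝ):ℂ) *
      (((x^2 : ℝ)):ℂ)^k) = ((Efun α β m x : ℝ):ℂ) := by
    rw [Efun]
    push_cast
    refine congr_arg _ (Finset.sum_congr rfl fun k _ => ?_)
    rw [pow_mul]
  rw [hval] at Tmodel
  refine Tmodel.congr fun h => ?_
  -- pointwise equality of model and original
  rw [gsBI_even]
  simp only [eval_mul, eval_C, eval_finset_sum, eval_prod, eval_add, eval_pow, eval_X]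
  have harg : ((m:ℂ) + (((w : ℝ):ℂ) + I*(h:ℂ)) + (((w : ℝ):ℂ) - I*(h:ℂ)) + ((α+1 : ℝ):ℂ) - 1)
      = ((((m:ℝ)+α+β+1 : ℝ)):ℂ) := by
    rw [hw]; push_cast; ring
  rw [harg]
  have hnegm : (-(m:ℂ)) = (((-(m:ℝ) : ℝ)):ℂ) := by push_cast; ring
  rw [hnegm]
  simp only [pochC_ofReal]
  have hk : ∀ k ∈ range (m+1),
      ((poch (-(m:ℝ)) k : ℝ):ℂ) * ((poch ((m:ℝ)+α+β+1) k : ℝ):ℂ) /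
          (pochC (((w : ℝ):ℂ) + I*(h:ℂ)) k * pochC (((w : ℝ):ℂ) - I*(h:ℂ)) k *
            ((poch (α+1) k : ℝ):ℂ) * (k.factorial : ℂ)) *
        ∏ j ∈ range k, (((j:ℂ))^2 + (((h*x : ℝ)):ℂ)^2)
      = ((eco α β m k : ℝ):ℂ) * ∏ j ∈ range k, ((((j:ℂ))^2 + (((h*x : ℝ)):ℂ)^2) /
          ((((w+(j:ℝ))^2 : ℝ):ℂ) + ((h:ℂ))^2)) := by
    intro k _
    rw [Finset.prod_div_distrib, pochC_conj_mul w h k, eco]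
    push_cast
    ring
  rw [Finset.sum_congr rfl hk, mul_assoc ((-1:ℂ)^m) (pochC (((w : ℝ):ℂ) + I*(h:ℂ)) m)
    (pochC (((w : ℝ):ℂ) - I*(h:ℂ)) m), pochC_conj_mul w h m, Apre]
  rw [Finset.prod_div_distrib, Finset.prod_const, Finset.card_range]
  push_cast
  ring
lemma gsBI_odd (a b c : ℂ) (m : ℕ) : gsBI a b c (2*m+1) =
    C ((-1:ℂ)^m * pochC (1+a) m * pochC (1+b) m * pochC (1+c) m / pochC ((m:ℂ)+a+b+c) m) *
        X *
      ∑ k ∈ range (m+1), C (pochC (-(m:ℂ)) k * pochC ((m:ℂ)+a+b+c) k /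
          (pochC (1+a) k * pochC (1+b) k * pochC (1+c) k * (k.factorial:ℂ))) *
        ∏ j ∈ Icc 1 k, (C ((j:ℂ)^2) + X^2) := by
  have h1 : ¬ Even (2*m+1) := by simp [Nat.even_add_one, Nat.even_iff]
  have h2 : (2*m+1)/2 = m := by omega
  simp only [gsBI, h2, if_neg h1]

lemma prod_Icc_eq (f : ℕ → ℂ) (k : ℕ) : ∏ j ∈ Icc 1 k, f j = ∏ j ∈ range k, f (j+1) := by
  induction k with
  | zero => simp
  | succ k ih => rw [Finset.prod_Icc_succ_top (by omega), ih, Finset.prod_range_succ]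

lemma odd_lim (α β : ℝ) (hα : α > -1) (hβ : β > 0) (m : ℕ) (x : ℝ) :
    Tendsto (fun h : ℝ => (((h:ℂ))^(2*m+1))⁻¹ *
        (gsBI (((β+1)/2 : ℝ) + I*(h:ℂ)) (((β+1)/2 : ℝ) - I*(h:ℂ)) ((α+1 : ℝ):ℂ) (2*m+1)).eval
          ((h*x : ℝ):ℂ))
      atTop (nhds (((Ofun α β m x : ℝ)):ℂ)) := by
  set w : ℝ := (β+1)/2 with hw
  have fac1 : ∀ j : ℕ, Tendsto (fun h : ℝ =>
      ((((w+1+(j:ℝ))^2 : ℝ):ℂ) + ((h:ℂ))^2) / ((h:ℂ))^2) atTop (nhds 1) := by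
    intro j
    have := lim_ratio ((w+1+(j:ℝ))^2) 0 1 le_rfl
    rw [Complex.ofReal_one] at this
    exact this.congr fun h => by push_cast; ring_nf
  have fac2 : ∀ j : ℕ, Tendsto (fun h : ℝ =>
      ((((j+1:ℕ)):ℂ)^2 + (((h*x : ℝ)):ℂ)^2) / ((((w+1+(j:ℝ))^2 : ℝ):ℂ) + ((h:ℂ))^2))
      atTop (nhds (((x^2 : ℝ)):ℂ)) := by
    intro j
    have := lim_ratio (((j:ℝ)+1)^2) ((w+1+(j:ℝ))^2) (x^2) (sq_nonneg _)
    exact this.congr fun h => by push_cast; ring_nf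
  have TG : Tendsto (fun h : ℝ => ((Bpre α β m : ℝ):ℂ) *
      ∏ j ∈ range m, (((((w+1+(j:ℝ))^2 : ℝ)):ℂ) + ((h:ℂ))^2) / ((h:ℂ))^2)
      atTop (nhds ((Bpre α β m : ℝ):ℂ)) := by
    have := tendsto_const_nhds (x := ((Bpre α β m : ℝ):ℂ)) (f := atTop) |>.mul
      (tendsto_finset_prod (range m) (fun j _ => fac1 j))
    simpa using this
  have TS : Tendsto (fun h : ℝ => ((x:ℝ):ℂ) * ∑ k ∈ range (m+1), ((oco α β m k : ℝ):ℂ) *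
      ∏ j ∈ range k, (((((j+1:ℕ)):ℂ))^2 + (((h*x : ℝ)):ℂ)^2) /
        ((((w+1+(j:ℝ))^2 : ℝ):ℂ) + ((h:ℂ))^2))
      atTop (nhds (((x:ℝ):ℂ) * ∑ k ∈ range (m+1), ((oco α β m k : ℝ):ℂ) *
        (((x^2 : ℝ)):ℂ)^k)) := by
    refine (tendsto_const_nhds (x := ((x:ℝ):ℂ)) (f := atTop)).mul
      (tendsto_finset_sum _ fun k _ => ?_)
    have := tendsto_const_nhds (x := ((oco α β m k : ℝ):ℂ)) (f := atTop) |>.mul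
      (tendsto_finset_prod (range k) (fun j _ => fac2 j))
    simpa [Finset.prod_const, Finset.card_range] using this
  have Tmodel := TG.mul TS
  have hval : ((Bpre α β m : ℝ):ℂ) * (((x:ℝ):ℂ) * ∑ k ∈ range (m+1),
      ((oco α β m k : ℝ):ℂ) * (((x^2 : ℝ)):ℂ)^k) = ((Ofun α β m x : ℝ):ℂ) := by
    rw [Ofun]
    push_cast
    simp only [Finset.mul_sum]
    exact Finset.sum_congr rfl fun k _ => by ring
  rw [hval] at Tmodel
  apply Tmodel.congr'
  filter_upwards [eventually_ge_atTop (1:ℝ)] with h hh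
  have hhne : ((h:ℂ)) ≠ 0 := by
    simp only [ne_eq, Complex.ofReal_eq_zero]
    intro hc; rw [hc] at hh; linarith
  -- pointwise equality of model and original
  rw [gsBI_odd]
  simp only [eval_mul, eval_C, eval_finset_sum, eval_prod, eval_add, eval_pow, eval_X]
  have h1a : (1 + (((w : ℝ):ℂ) + I*(h:ℂ)) : ℂ) = (((w+1 : ℝ):ℂ) + I*(h:ℂ)) := by
    push_cast; ring
  have h1b : (1 + (((w : ℝ):ℂ) - I*(h:ℂ)) : ℂ) = (((w+1 : ℝ):ℂ) - I*(h:ℂ)) := by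
    push_cast; ring
  have h1c : (1 + ((α+1 : ℝ):ℂ) : ℂ) = ((α+2 : ℝ):ℂ) := by push_cast; ring
  have harg : ((m:ℂ) + (((w : ℝ):ℂ) + I*(h:ℂ)) + (((w : ℝ):ℂ) - I*(h:ℂ)) + ((α+1 : ℝ):ℂ))
      = ((((m:ℝ)+α+β+2 : ℝ)):ℂ) := by
    rw [hw]; push_cast; ring
  have hnegm : (-(m:ℂ)) = (((-(m:ℝ) : ℝ)):ℂ) := by push_cast; ring
  rw [h1a, h1b, h1c, harg, hnegm]
  simp only [pochC_ofReal]
  have hk : ∀ k ∈ range (m+1),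
      ((poch (-(m:ℝ)) k : ℝ):ℂ) * ((poch ((m:ℝ)+α+β+2) k : ℝ):ℂ) /
          (pochC (((w+1 : ℝ):ℂ) + I*(h:ℂ)) k * pochC (((w+1 : ℝ):ℂ) - I*(h:ℂ)) k *
            ((poch (α+2) k : ℝ):ℂ) * (k.factorial : ℂ)) *
        ∏ j ∈ Icc 1 k, (((j:ℂ))^2 + (((h*x : ℝ)):ℂ)^2)
      = ((oco α β m k : ℝ):ℂ) * ∏ j ∈ range k, ((((((j+1:ℕ)):ℂ))^2 + (((h*x : ℝ)):ℂ)^2) /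
          ((((w+1+(j:ℝ))^2 : ℝ):ℂ) + ((h:ℂ))^2)) := by
    intro k _
    rw [prod_Icc_eq (fun j => (((j:ℕ):ℂ))^2 + (((h*x : ℝ)):ℂ)^2) k,
      Finset.prod_div_distrib, pochC_conj_mul (w+1) h k, oco]
    push_cast
    ring
  rw [Finset.sum_congr rfl hk, mul_assoc ((-1:ℂ)^m) (pochC (((w+1 : ℝ):ℂ) + I*(h:ℂ)) m)
    (pochC (((w+1 : ℝ):ℂ) - I*(h:ℂ)) m), pochC_conj_mul (w+1) h m]
  have hBpre : ((-1:ℂ)^m * (∏ j ∈ range m, (((((w+1+(j:ℝ))^2 : ℝ)):ℂ) + ((h:ℂ))^2)) *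
      ((poch (α+2) m : ℝ):ℂ)) / ((poch ((m:ℝ)+α+β+2) m : ℝ):ℂ)
      = ((Bpre α β m : ℝ):ℂ) * ∏ j ∈ range m, (((((w+1+(j:ℝ))^2 : ℝ)):ℂ) + ((h:ℂ))^2) := by
    rw [Bpre]; push_cast; ring
  rw [hBpre]
  have hcanc : (((h:ℂ))^(2*m+1))⁻¹ * ((h*x : ℝ):ℂ) = (((h:ℂ))^(2*m))⁻¹ * ((x:ℝ):ℂ) := by
    push_cast
    rw [pow_succ, mul_inv]
    linear_combination ((((h:ℂ))^(2*m))⁻¹ * ((x:ℝ):ℂ)) * (inv_mul_cancel₀ hhne)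
  rw [Finset.prod_div_distrib, Finset.prod_const, Finset.card_range]
  linear_combination (-((Bpre α β m : ℝ):ℂ) *
    (∏ j ∈ range m, (((((w+1+(j:ℝ))^2 : ℝ)):ℂ) + ((h:ℂ))^2)) *
    ∑ k ∈ range (m+1), ((oco α β m k : ℝ):ℂ) *
      ∏ j ∈ range k, ((((((j+1:ℕ)):ℂ))^2 + (((h*x : ℝ)):ℂ)^2) /
        ((((w+1+(j:ℝ))^2 : ℝ):ℂ) + ((h:ℂ))^2))) * hcanc
/-- the `h → ∞` limit
`h⁻ⁿ Îₙ(hx; (β+1)/2 + ih, (β+1)/2 - ih, α+1) → Gₙ(x;α,β)` relates the generalized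
symmetric Bannai–Ito polynomials to the monic generalized Gegenbauer polynomials. -/
theorem gsBannaiIto_to_genGegenbauer_limit
    (α β : ℝ) (hα : α > -1) (hβ : β > 0) (n : ℕ) (x : ℝ) :
    Tendsto (fun h : ℝ =>
        ((h : ℂ) ^ n)⁻¹ *
          (gsBI (((β + 1) / 2 : ℝ) + I * (h : ℂ)) (((β + 1) / 2 : ℝ) - I * (h : ℂ))
              ((α + 1 : ℝ) : ℂ) n).eval ((h * x : ℝ) : ℂ))
      atTop (nhds (((genGegenbauer α β (n + 1)).eval x : ℝ) : ℂ)) := by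
  rcases Nat.even_or_odd n with he | ho
  · obtain ⟨m, hm⟩ := he
    subst hm
    rw [show m + m = 2*m from by omega]
    have h1 := even_lim α β m x
    rw [(EO_eq α β hα hβ m x).1] at h1
    exact h1
  · obtain ⟨m, hm⟩ := ho
    subst hm
    have h1 := odd_lim α β hα hβ m x
    rw [(EO_eq α β hα hβ m x).2] at h1
    rw [show 2*m+1+1 = 2*m+2 from by omega]
    exact h1
end
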